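/- Let δ₁ ∈ (0,1) and define the parabola p(t) = δ₁ − (√(1−δ₁²)/δ₁)·t + (1/(4δ₁³))·t². Then: (1) for all t ∈ ℝ, 1 + p'(t)² − p(t)p''(t) = p(t)/(2δ₁³); (2) p attains its minimum at t_min = 2δ₁²√(1−δ₁²) with minimum value p(t_min) = δ₁³ > 0; and consequently (3) 1 + p'(t)² − p(t)p''(t) ≥ 1/2 for all t ∈ ℝ. -/

import Mathlib

/-- The parabola `p(t) = δ₁ - (√(1-δ₁²)/δ₁)t + t²/(4δ₁³)` from the proof of
Proposition 4.2 (Gluing ball and cylinder). -/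
noncomputable def parab (δ₁ : ℝ) : ℝ → ℝ :=
  fun t => δ₁ - (Real.sqrt (1 - δ₁ ^ 2) / δ₁) * t + (1 / (4 * δ₁ ^ 3)) * t ^ 2

lemma parab_hasDerivAt (δ₁ t : ℝ) :
    HasDerivAt (parab δ₁)
      (-(Real.sqrt (1 - δ₁ ^ 2) / δ₁) + (1 / (4 * δ₁ ^ 3)) * (2 * t)) t := by
  have h := ((hasDerivAt_const t δ₁).sub
      ((hasDerivAt_id t).const_mul (Real.sqrt (1 - δ₁ ^ 2) / δ₁))).add
      ((hasDerivAt_pow 2 t).const_mul (1 / (4 * δ₁ ^ 3)))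
  refine h.congr_deriv ?_
  ring

lemma parab_deriv (δ₁ : ℝ) :
    deriv (parab δ₁) = fun t =>
      -(Real.sqrt (1 - δ₁ ^ 2) / δ₁) + (1 / (4 * δ₁ ^ 3)) * (2 * t) := by
  funext t
  exact (parab_hasDerivAt δ₁ t).deriv

lemma parab_deriv2 (δ₁ t : ℝ) :
    deriv (deriv (parab δ₁)) t = 1 / (2 * δ₁ ^ 3) := by
  rw [parab_deriv]
  have h : HasDerivAt (fun t : ℝ =>
      -(Real.sqrt (1 - δ₁ ^ 2) / δ₁) + (1 / (4 * δ₁ ^ 3)) * (2 * t)) (1 / (2 * δ₁ ^ 3)) t := by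
    have := (hasDerivAt_const t (-(Real.sqrt (1 - δ₁ ^ 2) / δ₁))).add
      (((hasDerivAt_id t).const_mul 2).const_mul (1 / (4 * δ₁ ^ 3)))
    refine this.congr_deriv ?_
    ring
  exact h.deriv

/-- The computation in the proof of Proposition 4.2: `P[p] = p/(2δ₁³)`, the minimum of `p`
is `δ₁³ > 0`, attained at `t_min = 2δ₁²√(1-δ₁²)`, and consequently `P[p] ≥ 1/2`. -/
theorem parabola_two_convexity (δ₁ : ℝ) (hδ₁ : δ₁ ∈ Set.Ioo (0 : ℝ) 1) :
    (∀ t : ℝ, 1 + (deriv (parab δ₁) t) ^ 2 - parab δ₁ t * deriv (deriv (parab δ₁)) t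
      = parab δ₁ t / (2 * δ₁ ^ 3)) ∧
    (∀ t : ℝ, parab δ₁ (2 * δ₁ ^ 2 * Real.sqrt (1 - δ₁ ^ 2)) ≤ parab δ₁ t) ∧
    parab δ₁ (2 * δ₁ ^ 2 * Real.sqrt (1 - δ₁ ^ 2)) = δ₁ ^ 3 ∧
    0 < δ₁ ^ 3 ∧
    (∀ t : ℝ, 1 / 2 ≤ 1 + (deriv (parab δ₁) t) ^ 2
      - parab δ₁ t * deriv (deriv (parab δ₁)) t) := by
  obtain ⟨h0, h1⟩ := hδ₁
  have hne : δ₁ ≠ 0 := ne_of_gt h0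
  have hs2 : Real.sqrt (1 - δ₁ ^ 2) ^ 2 = 1 - δ₁ ^ 2 := Real.sq_sqrt (by nlinarith)
  have heq : ∀ t : ℝ, 1 + (deriv (parab δ₁) t) ^ 2
      - parab δ₁ t * deriv (deriv (parab δ₁)) t = parab δ₁ t / (2 * δ₁ ^ 3) := by
    intro t
    rw [parab_deriv2, parab_deriv]
    simp only [parab]
    field_simp
    linear_combination (32 * δ₁ ^ 4) * hs2
  have hval : parab δ₁ (2 * δ₁ ^ 2 * Real.sqrt (1 - δ₁ ^ 2)) = δ₁ ^ 3 := by
    simp only [parab]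
    field_simp
    linear_combination (-4) * hs2
  have hmin' : ∀ t : ℝ, parab δ₁ (2 * δ₁ ^ 2 * Real.sqrt (1 - δ₁ ^ 2)) ≤ parab δ₁ t := by
    intro t
    simp only [parab]
    have key : δ₁ - Real.sqrt (1 - δ₁ ^ 2) / δ₁ * t + 1 / (4 * δ₁ ^ 3) * t ^ 2
        - (δ₁ - Real.sqrt (1 - δ₁ ^ 2) / δ₁ * (2 * δ₁ ^ 2 * Real.sqrt (1 - δ₁ ^ 2)) + 1 / (4 * δ₁ ^ 3) * (2 * δ₁ ^ 2 * Real.sqrt (1 - δ₁ ^ 2)) ^ 2)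
        = (t - 2 * δ₁ ^ 2 * Real.sqrt (1 - δ₁ ^ 2)) ^ 2 / (4 * δ₁ ^ 3) := by
      field_simp
      ring
    nlinarith [div_nonneg (sq_nonneg (t - 2 * δ₁ ^ 2 * Real.sqrt (1 - δ₁ ^ 2))) (by positivity : (0:ℝ) ≤ 4 * δ₁ ^ 3)]
  refine ⟨heq, hmin', hval, by positivity, fun t => ?_⟩
  rw [heq t]
  have := hmin' t
  rw [hval] at this
  calc (1:ℝ)/2 = δ₁ ^ 3 / (2 * δ₁ ^ 3) := by rw [eq_div_iff (by positivity : (2:ℝ) * δ₁ ^ 3 ≠ 0)]; ring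
    _ ≤ parab δ₁ t / (2 * δ₁ ^ 3) := by gcongr
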